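/- Every sequence over a k-letter alphabet in which no two consecutive letters are equal and which avoids the pattern abab (i.e., contains no subsequence x,y,x,y with x ≠ y) has length at most 2k - 1. -/

import Mathlib

/-- Every sequence over a `k`-letter alphabet in which no two consecutive letters
are equal and which avoids the pattern `abab` has length at most `2k - 1`. -/
theorem stmt_4 (k N : ℕ) (f : Fin N → Fin k)
    (hcons : ∀ (i : ℕ) (h : i + 1 < N), f ⟨i, by omega⟩ ≠ f ⟨i + 1, h⟩)
    (habab : ¬ ∃ i1 i2 i3 i4 : Fin N, i1 < i2 ∧ i2 < i3 ∧ i3 < i4 ∧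
      f i1 = f i3 ∧ f i2 = f i4 ∧ f i1 ≠ f i2) :
    N ≤ 2 * k - 1 := by
  classical
  rcases Nat.eq_zero_or_pos N with h0 | hN
  · omega
  have hk : 0 < k := Fin.pos (f ⟨0, hN⟩)
  -- L: last occurrences; F: first occurrences
  set L : Finset (Fin N) := Finset.univ.filter (fun i => ∀ j, i < j → f j ≠ f i) with hLdef
  set F : Finset (Fin N) := Finset.univ.filter (fun i => ∀ j, j < i → f j ≠ f i) with hFdef
  have hLcard : L.card ≤ k := by
    have h : L.card ≤ (Finset.univ : Finset (Fin k)).card := by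
      apply Finset.card_le_card_of_injOn f (fun a _ => Finset.mem_univ (f a))
      intro a ha b hb hab
      simp only [hLdef, Finset.mem_coe, Finset.mem_filter] at ha hb
      by_contra hne
      rcases lt_or_gt_of_ne hne with h | h
      · exact ha.2 b h hab.symm
      · exact hb.2 a h hab
    simpa using h
  have hFcard : F.card ≤ k := by
    have h : F.card ≤ (Finset.univ : Finset (Fin k)).card := by
      apply Finset.card_le_card_of_injOn f (fun a _ => Finset.mem_univ (f a))
      intro a ha b hb hab
      simp only [hFdef, Finset.mem_coe, Finset.mem_filter] at ha hb
      by_contra hne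
      rcases lt_or_gt_of_ne hne with h | h
      · exact hb.2 a h hab
      · exact ha.2 b h hab.symm
    simpa using h
  have h0F : (⟨0, hN⟩ : Fin N) ∈ F := by
    simp only [hFdef, Finset.mem_filter]
    refine ⟨Finset.mem_univ _, fun j hj => ?_⟩
    exact absurd hj (by simp [Fin.lt_def])
  -- every non-last position i has i+1 < N and i+1 a first occurrence other than 0
  have key : ∀ i : Fin N, i ∉ L → ∃ h : (i : ℕ) + 1 < N,
      (⟨(i : ℕ) + 1, h⟩ : Fin N) ∈ F.erase ⟨0, hN⟩ := by
    intro i hiL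
    simp only [hLdef, Finset.mem_filter, Finset.mem_univ, true_and, not_forall] at hiL
    obtain ⟨j, hij, hfj⟩ := hiL
    push_neg at hfj
    have hji : (i : ℕ) < (j : ℕ) := hij
    have hne1 : (j : ℕ) ≠ (i : ℕ) + 1 := by
      intro hE
      have hj' : j = ⟨(i : ℕ) + 1, hE ▸ j.2⟩ := Fin.ext hE
      rw [hj'] at hfj
      exact hcons i (hE ▸ j.2) (by simpa using hfj.symm)
    have hlt : (i : ℕ) + 1 < N := by
      have := j.2; omega
    refine ⟨hlt, ?_⟩
    have hj2 : (i : ℕ) + 1 < (j : ℕ) := by omega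
    have hne : f ⟨(i : ℕ) + 1, hlt⟩ ≠ f i := by
      intro hE
      exact hcons i hlt (by simpa using hE.symm)
    refine Finset.mem_erase.mpr ⟨by simp [Fin.ext_iff], ?_⟩
    simp only [hFdef, Finset.mem_filter]
    refine ⟨Finset.mem_univ _, fun p hp hfp => ?_⟩
    have hpi : (p : ℕ) < (i : ℕ) + 1 := hp
    rcases Nat.lt_or_ge (p : ℕ) (i : ℕ) with hpi' | hpi'
    · -- abab pattern: p, i, i+1, j
      exact habab ⟨p, i, ⟨(i : ℕ) + 1, hlt⟩, j,
        by exact hpi', by simp [Fin.lt_def], by simpa [Fin.lt_def] using hj2,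
        hfp, hfj.symm, by rw [hfp]; exact hne⟩
    · have : (p : ℕ) = (i : ℕ) := by omega
      have hpi2 : p = i := Fin.ext this
      subst hpi2
      exact hne hfp.symm
  -- injection from Lᶜ into F.erase 0
  have hcompl : Lᶜ.card ≤ (F.erase ⟨0, hN⟩).card := by
    refine Finset.card_le_card_of_injOn
      (fun i => if h : (i : ℕ) + 1 < N then ⟨(i : ℕ) + 1, h⟩ else i) ?_ ?_
    · intro a ha
      simp only [Finset.mem_coe, Finset.mem_compl] at ha
      obtain ⟨h, hmem⟩ := key a ha
      simpa [dif_pos h] using hmem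
    · intro a ha b hb hab
      simp only [Finset.mem_compl, Finset.mem_coe] at ha hb
      obtain ⟨h1, _⟩ := key a ha
      obtain ⟨h2, _⟩ := key b hb
      simp only [dif_pos h1, dif_pos h2, Fin.mk.injEq] at hab
      exact Fin.ext (by omega)
  have hE : (F.erase ⟨0, hN⟩).card ≤ k - 1 := by
    have := Finset.card_erase_of_mem h0F
    omega
  have hsum : L.card + Lᶜ.card = N := by
    rw [Finset.card_add_card_compl]
    simp
  omega
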